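/- Let K be a number field, μ_m the m-th roots of unity in an algebraic closure, a a divisor of m, and suppose Gal(K(μ_a)/K) ≅ (ℤ/aℤ)^* (i.e., the Galois group acts transitively on primitive a-th roots of unity). Let y ∈ K, r ≥ 1, and X, z ∈ K(μ_a) with X ∈ K such that X^r - ζ·y = z^p for some primitive a-th root of unity ζ and prime p. Then ∏_{σ ∈ Gal(K(μ_a)/K)} (X^r - σ(ζ)·y) = u^p for some u ∈ K, and consequently X^{ra} - y^a = G·u^p where G = ∏_{ω ∈ μ_a, ord(ω) < a} (X^r - ω·y) ∈ K. -/

import Mathlib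

open Polynomial in
theorem stmt_13 (K L : Type*) [Field K] [NumberField K] [Field L] [Algebra K L]
    [FiniteDimensional K L] [IsGalois K L]
    (m a : ℕ) (ha : 0 < a) (ham : a ∣ m)
    (hcyc : IsCyclotomicExtension {a} K L)
    (htrans : ∀ ζ ζ' : L, IsPrimitiveRoot ζ a → IsPrimitiveRoot ζ' a →
      ∃ σ : L ≃ₐ[K] L, σ ζ = ζ')
    (y X : K) (r : ℕ) (hr : 1 ≤ r) (p : ℕ) (hp : p.Prime)
    (ζ : L) (hζ : IsPrimitiveRoot ζ a) (z : L)
    (hz : (algebraMap K L X) ^ r - ζ * algebraMap K L y = z ^ p) :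
    ∃ u G : K,
      (∏ σ : L ≃ₐ[K] L, ((algebraMap K L X) ^ r - σ ζ * algebraMap K L y))
        = algebraMap K L u ^ p ∧
      algebraMap K L G =
        ∏ ω ∈ (Polynomial.nthRootsFinset a (1 : L)).filter (fun ω => orderOf ω < a),
          ((algebraMap K L X) ^ r - ω * algebraMap K L y) ∧
      X ^ (r * a) - y ^ a = G * u ^ p := by
  classical
  have hinj : Function.Injective (algebraMap K L) := (algebraMap K L).injective
  -- first part: the product over automorphisms is (norm z)^p
  have hfac : ∀ σ : L ≃ₐ[K] L,
      (algebraMap K L X) ^ r - σ ζ * algebraMap K L y = (σ z) ^ p := by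
    intro σ
    have := congrArg σ hz
    simpa [map_sub, map_mul, map_pow, AlgEquiv.commutes] using this
  have hu : (∏ σ : L ≃ₐ[K] L, ((algebraMap K L X) ^ r - σ ζ * algebraMap K L y))
      = algebraMap K L (Algebra.norm K z) ^ p := by
    rw [Algebra.norm_eq_prod_automorphisms, ← Finset.prod_pow]
    exact Finset.prod_congr rfl fun σ _ => hfac σ
  -- injectivity of σ ↦ σ ζ
  have hkey : ∀ σ τ : L ≃ₐ[K] L, σ ζ = τ ζ → σ = τ := by
    intro σ τ h
    refine AlgEquiv.ext fun x => ?_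
    have hx := hcyc.adjoin_roots x
    induction hx using Algebra.adjoin_induction with
    | mem b hb =>
      obtain ⟨n, hn, -, hbn⟩ := hb
      simp only [Set.mem_singleton_iff] at hn
      subst n
      have : NeZero a := ⟨ha.ne'⟩
      obtain ⟨i, _, rfl⟩ := hζ.eq_pow_of_pow_eq_one (by simpa using hbn)
      simp [map_pow, h]
    | algebraMap r => simp
    | add u v _ _ hu hv => simp [map_add, hu, hv]
    | mul u v _ _ hu hv => simp [map_mul, hu, hv]
  -- σ ζ is a primitive root, of order a
  have hordmap : ∀ (τ : L ≃ₐ[K] L) (w : L), orderOf (τ w) = orderOf w := by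
    intro τ w
    have h1 : orderOf ((τ : L →* L) w) = orderOf w :=
      orderOf_injective (τ : L →* L) τ.injective w
    simpa using h1
  have horder : ∀ σ : L ≃ₐ[K] L, orderOf (σ ζ) = a := by
    intro σ
    rw [hordmap, ← hζ.eq_orderOf]
  -- elements of the "non-primitive" filter
  set S := (Polynomial.nthRootsFinset a (1 : L)).filter (fun ω => orderOf ω < a) with hS
  -- the primitive part of the product equals the product over automorphisms
  have hprim : ∏ ω ∈ (Polynomial.nthRootsFinset a (1 : L)).filter (fun ω => ¬ orderOf ω < a),
      ((algebraMap K L X) ^ r - ω * algebraMap K L y)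
      = ∏ σ : L ≃ₐ[K] L, ((algebraMap K L X) ^ r - σ ζ * algebraMap K L y) := by
    refine (Finset.prod_nbij (fun σ => σ ζ) ?_ ?_ ?_ ?_).symm
    · intro σ _
      simp only [Finset.mem_filter, Polynomial.mem_nthRootsFinset ha]
      constructor
      · have := hζ.pow_eq_one
        calc (σ ζ) ^ a = σ (ζ ^ a) := by rw [map_pow]
        _ = 1 := by rw [this, map_one]
      · rw [horder σ]; exact lt_irrefl a
    · intro σ _ τ _ h
      exact hkey σ τ h
    · intro ω hω
      simp only [Finset.coe_filter, Set.mem_setOf_eq, Polynomial.mem_nthRootsFinset ha] at hω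
      obtain ⟨hω1, hω2⟩ := hω
      have hωprim : IsPrimitiveRoot ω a := by
        have hdvd : orderOf ω ∣ a := orderOf_dvd_of_pow_eq_one hω1
        have h0 : 0 < orderOf ω := by
          have : IsOfFinOrder ω := isOfFinOrder_iff_pow_eq_one.2 ⟨a, ha, hω1⟩
          exact this.orderOf_pos
        have heq : orderOf ω = a := by
          rcases (Nat.le_of_dvd ha hdvd).lt_or_eq with h | h
          · exact absurd h hω2
          · exact h
        rw [← heq]
        exact IsPrimitiveRoot.orderOf ω
      obtain ⟨σ, hσ⟩ := htrans ζ ω hζ hωprim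
      exact ⟨σ, Finset.mem_coe.2 (Finset.mem_univ σ), hσ⟩
    · intro σ _; rfl
  -- S's product is Galois-fixed hence comes from K
  have hGfix : ∀ τ : L ≃ₐ[K] L,
      τ (∏ ω ∈ S, ((algebraMap K L X) ^ r - ω * algebraMap K L y))
        = ∏ ω ∈ S, ((algebraMap K L X) ^ r - ω * algebraMap K L y) := by
    intro τ
    rw [map_prod]
    refine Finset.prod_nbij (fun ω => τ ω) ?_ ?_ ?_ ?_
    · intro ω hω
      simp only [hS, Finset.mem_filter, Polynomial.mem_nthRootsFinset ha] at hω ⊢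
      refine ⟨?_, ?_⟩
      · rw [← map_pow, hω.1, map_one]
      · rw [hordmap]; exact hω.2
    · intro ω _ ω' _ h; exact τ.injective h
    · intro ω hω
      simp only [hS, Finset.coe_filter, Set.mem_setOf_eq,
        Polynomial.mem_nthRootsFinset ha] at hω ⊢
      refine ⟨τ.symm ω, ⟨?_, ?_⟩, by simp⟩
      · have := hω.1
        apply τ.injective
        rw [map_pow, AlgEquiv.apply_symm_apply, map_one, this]
      · have := hordmap τ.symm ω
        rw [this]; exact hω.2
    · intro ω _
      rw [map_sub, map_mul, map_pow, AlgEquiv.commutes, AlgEquiv.commutes]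
  have hGmem : (∏ ω ∈ S, ((algebraMap K L X) ^ r - ω * algebraMap K L y))
      ∈ Set.range (algebraMap K L) := by
    have hfix : (∏ ω ∈ S, ((algebraMap K L X) ^ r - ω * algebraMap K L y))
        ∈ IntermediateField.fixedField (⊤ : Subgroup (L ≃ₐ[K] L)) := by
      intro σ; exact hGfix σ
    have hbot : IntermediateField.fixedField (⊤ : Subgroup (L ≃ₐ[K] L)) = ⊥ :=
      ((IsGalois.tfae (F := K) (E := L)).out 0 1).mp (by infer_instance)
    rw [hbot] at hfix
    exact IntermediateField.mem_bot.mp hfix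
  obtain ⟨G, hG⟩ := hGmem
  refine ⟨Algebra.norm K z, G, hu, hG, ?_⟩
  apply hinj
  rw [map_sub, map_pow, map_pow, map_mul, map_pow, pow_mul, hG,
    hζ.pow_sub_pow_eq_prod_sub_mul ha (x := (algebraMap K L X) ^ r) (y := algebraMap K L y),
    ← Finset.prod_filter_mul_prod_filter_not (Polynomial.nthRootsFinset a (1 : L))
      (fun ω => orderOf ω < a), hprim, hu]
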